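/- With the metric Lie algebra of the previous statement (brackets [x₁,xᵢ]=xᵢ, [x₁,xₙ]=−λx₁+xₙ, [xᵢ,xₙ]=−λxᵢ, pseudo-orthonormal basis with signs εᵢ), the curvature tensor R(X,Y) = [∇_X, ∇_Y] − ∇_{[X,Y]} satisfies R(X,Y) = −(λ²εₙ + ε₁)·(X ∧ Y) for all X, Y, where (X ∧ Y)Z = ⟨Y,Z⟩X − ⟨X,Z⟩Y. -/

import Mathlib

set_option maxHeartbeats 4000000 in
theorem stmt_13 (n : ℕ) (hn : 2 ≤ n) (lam : ℝ)
    {L : Type*} [LieRing L] [LieAlgebra ℝ L]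
    (B : LinearMap.BilinForm ℝ L) (hBsymm : ∀ X Y : L, B X Y = B Y X)
    (x : Module.Basis (Fin n) ℝ L) (ε : Fin n → ℝ) (hε : ∀ i, ε i = 1 ∨ ε i = -1)
    (hortho : ∀ i j : Fin n, B (x i) (x j) = if i = j then ε i else 0)
    (z ℓ : Fin n) (hz : (z : ℕ) = 0) (hℓ : (ℓ : ℕ) = n - 1)
    (hx1 : ∀ i : Fin n, i ≠ z → i ≠ ℓ → ⁅x z, x i⁆ = x i)
    (hx2 : ⁅x z, x ℓ⁆ = -lam • x z + x ℓ)
    (hx3 : ∀ i : Fin n, i ≠ z → i ≠ ℓ → ⁅x i, x ℓ⁆ = -lam • x i)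
    (hx4 : ∀ i j : Fin n, i ≠ z → i ≠ ℓ → j ≠ z → j ≠ ℓ → ⁅x i, x j⁆ = 0)
    (D : L → L → L)
    (hKoszul : ∀ X Y Z : L,
      2 * B (D X Y) Z = B ⁅X, Y⁆ Z + B ⁅Z, X⁆ Y + B X ⁅Z, Y⁆) :
    ∀ X Y Z : L,
      D X (D Y Z) - D Y (D X Z) - D ⁅X, Y⁆ Z =
        -(lam ^ 2 * ε ℓ + ε z) • (B Y Z • X - B X Z • Y) := by
  have hzl : z ≠ ℓ := by
    intro h; rw [h] at hz; omega
  have hε2 : ∀ i, ε i * ε i = 1 := by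
    intro i; rcases hε i with h | h <;> rw [h] <;> norm_num
  -- bracket table
  have br_mz : ∀ i : Fin n, i ≠ z → i ≠ ℓ → ⁅x i, x z⁆ = -(x i) := by
    intro i h1 h2; rw [← lie_skew, hx1 i h1 h2]
  have br_lz : ⁅x ℓ, x z⁆ = lam • x z - x ℓ := by
    rw [← lie_skew, hx2]; simp [neg_add]; abel
  have br_lm : ∀ i : Fin n, i ≠ z → i ≠ ℓ → ⁅x ℓ, x i⁆ = lam • x i := by
    intro i h1 h2; rw [← lie_skew, hx3 i h1 h2]; simp
  -- nondegeneracy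
  have hnd0 : ∀ W : L, (∀ k, B W (x k) = 0) → W = 0 := by
    intro W h
    have hrepr : ∀ k, x.repr W k = 0 := by
      intro k
      have h2 := h k
      rw [← x.linearCombination_repr W] at h2
      rw [Finsupp.linearCombination_apply, Finsupp.sum] at h2
      simp only [map_sum, map_smul, LinearMap.sum_apply, LinearMap.smul_apply, smul_eq_mul,
        hortho] at h2
      rw [Finset.sum_eq_single k] at h2
      · rcases hε k with he | he <;> simp [he] at h2 <;> simpa using h2
      · intro b _ hb; simp [hb]
      · intro hk; simp at hk; simp [hk]
    have hr : x.repr W = 0 := by ext k; simp [hrepr k]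
    have := congrArg x.repr.symm hr
    simpa using this
  have hnd : ∀ V W : L, (∀ k, B V (x k) = B W (x k)) → V = W := by
    intro V W h
    have : V - W = 0 := by
      apply hnd0; intro k; simp only [map_sub, LinearMap.sub_apply]; rw [h k]; ring
    exact sub_eq_zero.mp this
  -- linearity of D
  have hDadd_l : ∀ X X' Y : L, D (X + X') Y = D X Y + D X' Y := by
    intro X X' Y; apply hnd; intro k
    have e1 := hKoszul (X + X') Y (x k)
    have e2 := hKoszul X Y (x k)
    have e3 := hKoszul X' Y (x k)
    simp only [add_lie, lie_add, map_add, LinearMap.add_apply] at e1 e2 e3 ⊢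
    linarith
  have hDsmul_l : ∀ (a : ℝ) (X Y : L), D (a • X) Y = a • D X Y := by
    intro a X Y; apply hnd; intro k
    have e1 := hKoszul (a • X) Y (x k)
    have e2 := hKoszul X Y (x k)
    simp only [smul_lie, lie_smul, map_smul, LinearMap.smul_apply, smul_eq_mul] at e1 e2 ⊢
    linear_combination e1 / 2 - a * e2 / 2
  have hDadd_r : ∀ X Y Y' : L, D X (Y + Y') = D X Y + D X Y' := by
    intro X Y Y'; apply hnd; intro k
    have e1 := hKoszul X (Y + Y') (x k)
    have e2 := hKoszul X Y (x k)
    have e3 := hKoszul X Y' (x k)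
    simp only [add_lie, lie_add, map_add, LinearMap.add_apply] at e1 e2 e3 ⊢
    linarith
  have hDsmul_r : ∀ (a : ℝ) (X Y : L), D X (a • Y) = a • D X Y := by
    intro a X Y; apply hnd; intro k
    have e1 := hKoszul X (a • Y) (x k)
    have e2 := hKoszul X Y (x k)
    simp only [smul_lie, lie_smul, map_smul, LinearMap.smul_apply, smul_eq_mul] at e1 e2 ⊢
    linear_combination e1 / 2 - a * e2 / 2
  have hB : ∀ X Y Z : L, B (D X Y) Z = (B ⁅X,Y⁆ Z + B ⁅Z,X⁆ Y + B X ⁅Z,Y⁆)/2 := by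
    intro X Y Z; have := hKoszul X Y Z; linarith
  have hD_zz : D (x z) (x z) = (lam * (ε z * ε ℓ)) • x ℓ := by
    apply hnd; intro k; rw [hB]
    by_cases hkz : k = z
    · simp [hkz, lie_self, hortho, hzl, Ne.symm hzl]
    · by_cases hkl : k = ℓ
      · simp [hkl, lie_self, br_lz, hortho, hzl, Ne.symm hzl, map_sub, map_smul]
        rcases hε ℓ with h | h <;> rw [h] <;> ring
      · simp [lie_self, br_mz k hkz hkl, hortho, hkz, hkl, Ne.symm hkz, Ne.symm hkl]
  have hD_zm : ∀ i : Fin n, i ≠ z → i ≠ ℓ → D (x z) (x i) = 0 := by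
    intro i hiz hil
    apply hnd; intro k; rw [hB]
    by_cases hkz : k = z
    · simp [hkz, hx1 i hiz hil, lie_self, hortho, hiz, Ne.symm hiz]
    · by_cases hkl : k = ℓ
      · simp [hkl, hx1 i hiz hil, br_lz, br_lm i hiz hil, hortho, hzl, Ne.symm hzl,
          hiz, Ne.symm hiz, hil, Ne.symm hil, map_sub, map_smul]
      · simp [hx1 i hiz hil, br_mz k hkz hkl, hx4 k i hkz hkl hiz hil, hortho,
          hkz, Ne.symm hkz, hkl, Ne.symm hkl, hiz, Ne.symm hiz]
        rcases eq_or_ne i k with hik | hik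
        · simp [hik]
        · simp [hik, Ne.symm hik]
  have hD_zl : D (x z) (x ℓ) = (-lam) • x z := by
    apply hnd; intro k; rw [hB]
    by_cases hkz : k = z
    · simp [hkz, hx2, lie_self, hortho, hzl, Ne.symm hzl, map_add, map_smul]
    · by_cases hkl : k = ℓ
      · simp [hkl, hx2, br_lz, lie_self, hortho, hzl, Ne.symm hzl, map_add, map_sub, map_smul]
      · simp [hx2, br_mz k hkz hkl, hx3 k hkz hkl, hortho, hkz, Ne.symm hkz, hkl, Ne.symm hkl,
          hzl, Ne.symm hzl, map_add, map_neg, map_smul]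
  have hD_mz : ∀ i : Fin n, i ≠ z → i ≠ ℓ → D (x i) (x z) = -(x i) := by
    intro i hiz hil
    apply hnd; intro k; rw [hB]
    by_cases hkz : k = z
    · simp [hkz, br_mz i hiz hil, hx1 i hiz hil, lie_self, hortho, hiz, Ne.symm hiz]
    · by_cases hkl : k = ℓ
      · simp [hkl, br_mz i hiz hil, br_lz, br_lm i hiz hil, hortho, hiz, Ne.symm hiz,
          hil, Ne.symm hil, hzl, Ne.symm hzl, map_sub, map_smul]
      · simp [br_mz i hiz hil, br_mz k hkz hkl, hx4 k i hkz hkl hiz hil, hortho,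
          hkz, Ne.symm hkz, hkl, Ne.symm hkl]
  have hD_mm : ∀ i j : Fin n, i ≠ z → i ≠ ℓ → j ≠ z → j ≠ ℓ →
      D (x i) (x j) = if i = j then (ε i * ε z) • x z + (lam * (ε i * ε ℓ)) • x ℓ else 0 := by
    intro i j hiz hil hjz hjl
    apply hnd; intro k; rw [hB]
    by_cases hij : i = j
    · subst hij
      simp only [if_pos rfl]
      by_cases hkz : k = z
      · simp [hkz, lie_self, hx1 i hiz hil, hx4 i i hiz hil hiz hil, hortho,
          hzl, Ne.symm hzl, map_add, map_smul]
        rcases hε z with h | h <;> rw [h] <;> ring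
      · by_cases hkl : k = ℓ
        · simp [hkl, lie_self, br_lm i hiz hil, hx4 i i hiz hil hiz hil, hortho,
            hzl, Ne.symm hzl, map_add, map_smul]
          rcases hε ℓ with h | h <;> rw [h] <;> ring
        · simp [hx4 i i hiz hil hiz hil, hx4 k i hkz hkl hiz hil, hortho,
            hkz, Ne.symm hkz, hkl, Ne.symm hkl, map_add, map_smul]
    · simp only [if_neg hij]
      by_cases hkz : k = z
      · simp [hkz, hx1 i hiz hil, hx1 j hjz hjl, hx4 i j hiz hil hjz hjl, hortho, hij, Ne.symm hij]
      · by_cases hkl : k = ℓ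
        · simp [hkl, br_lm i hiz hil, br_lm j hjz hjl, hx4 i j hiz hil hjz hjl, hortho,
            hij, Ne.symm hij, map_smul]
        · simp [br_mz k hkz hkl, hx4 k i hkz hkl hiz hil, hx4 k j hkz hkl hjz hjl,
            hx4 i j hiz hil hjz hjl, hortho, hij, Ne.symm hij]
  have hD_ml : ∀ i : Fin n, i ≠ z → i ≠ ℓ → D (x i) (x ℓ) = (-lam) • x i := by
    intro i hiz hil
    apply hnd; intro k; rw [hB]
    by_cases hkz : k = z
    · simp [hkz, hx3 i hiz hil, hx1 i hiz hil, hx2, hortho, hiz, Ne.symm hiz,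
        hil, Ne.symm hil, hzl, Ne.symm hzl, map_add, map_smul]
    · by_cases hkl : k = ℓ
      · simp [hkl, hx3 i hiz hil, br_lm i hiz hil, lie_self, hortho,
          hil, Ne.symm hil, map_smul]
      · simp [hx3 i hiz hil, hx3 k hkz hkl, hx4 k i hkz hkl hiz hil, hortho,
          hkz, hkl, map_smul]
  have hD_lz : D (x ℓ) (x z) = -(x ℓ) := by
    apply hnd; intro k; rw [hB]
    by_cases hkz : k = z
    · simp [hkz, br_lz, hx2, lie_self, hortho, hzl, Ne.symm hzl, map_add, map_sub, map_smul]
    · by_cases hkl : k = ℓ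
      · simp [hkl, br_lz, lie_self, hortho, hzl, Ne.symm hzl, map_sub, map_smul]
      · simp [br_lz, br_mz k hkz hkl, hx3 k hkz hkl, hortho, hkz, Ne.symm hkz,
          hkl, Ne.symm hkl, hzl, Ne.symm hzl, map_sub, map_smul]
  have hD_lm : ∀ i : Fin n, i ≠ z → i ≠ ℓ → D (x ℓ) (x i) = 0 := by
    intro i hiz hil
    apply hnd; intro k; rw [hB]
    by_cases hkz : k = z
    · rw [hkz, br_lm i hiz hil, hx2, hx1 i hiz hil]
      simp [hortho, hiz, Ne.symm hiz, hil, Ne.symm hil, hzl, Ne.symm hzl, map_add, map_smul]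
    · by_cases hkl : k = ℓ
      · rw [hkl, br_lm i hiz hil, lie_self]
        simp [hortho, hiz, Ne.symm hiz, hil, Ne.symm hil, map_smul]
      · rw [br_lm i hiz hil, hx3 k hkz hkl, hx4 k i hkz hkl hiz hil]
        simp [hortho, hkz, hkl, hil, Ne.symm hil, map_smul]
        rcases eq_or_ne i k with hik | hik
        · simp [hik]
        · simp [hik, Ne.symm hik]
  have hD_ll : D (x ℓ) (x ℓ) = (ε z * ε ℓ) • x z := by
    apply hnd; intro k; rw [hB]
    by_cases hkz : k = z
    · simp [hkz, lie_self, hx2, hortho, hzl, Ne.symm hzl, map_add, map_smul]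
      rcases hε z with h | h <;> rw [h] <;> ring
    · by_cases hkl : k = ℓ
      · simp [hkl, lie_self, hortho, hzl, Ne.symm hzl]
      · simp [lie_self, hx3 k hkz hkl, hortho, hkz, Ne.symm hkz, hkl, Ne.symm hkl, map_smul]
  have hDzero_r : ∀ X : L, D X 0 = 0 := by
    intro X; have := hDsmul_r 0 X 0; simpa using this
  have hDzero_l : ∀ Y : L, D 0 Y = 0 := by
    intro Y; have := hDsmul_l 0 0 Y; simpa using this
  have hDneg_r : ∀ X Y : L, D X (-Y) = -D X Y := by
    intro X Y; have := hDsmul_r (-1) X Y; simpa using this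
  have hDneg_l : ∀ X Y : L, D (-X) Y = -D X Y := by
    intro X Y; have := hDsmul_l (-1) X Y; simpa using this
  have hDsub_r : ∀ X Y Y' : L, D X (Y - Y') = D X Y - D X Y' := by
    intro X Y Y'; rw [sub_eq_add_neg, hDadd_r, hDneg_r, sub_eq_add_neg]
  have hDsub_l : ∀ X X' Y : L, D (X - X') Y = D X Y - D X' Y := by
    intro X X' Y; rw [sub_eq_add_neg, hDadd_l, hDneg_l, sub_eq_add_neg]
  have hε2' : ∀ i, ε i ^ 2 = 1 := by
    intro i; rcases hε i with h | h <;> rw [h] <;> norm_num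
  have tri : ∀ m : Fin n, m = z ∨ m = ℓ ∨ (m ≠ z ∧ m ≠ ℓ) := by tauto
  clear hKoszul hB hnd hnd0 hBsymm
  have key : ∀ i j k : Fin n,
      D (x i) (D (x j) (x k)) - D (x j) (D (x i) (x k)) - D ⁅x i, x j⁆ (x k) =
        -(lam ^ 2 * ε ℓ + ε z) • (B (x j) (x k) • x i - B (x i) (x k) • x j) := by
    intro i j k
    rcases tri i with hi1 | hi1 | ⟨hi1, hi2⟩ <;>
      rcases tri j with hj1 | hj1 | ⟨hj1, hj2⟩ <;>
        rcases tri k with hk1 | hk1 | ⟨hk1, hk2⟩ <;>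
    rcases eq_or_ne i j with hij | hij <;>
      rcases eq_or_ne i k with hik | hik <;>
        rcases eq_or_ne j k with hjk | hjk
    all_goals first
      | omega
      | (try subst hij
         try subst hik
         try subst hjk
         try subst hi1
         try subst hj1
         try subst hk1
         try have hij' : _ ≠ _ := Ne.symm hij
         try have hik' : _ ≠ _ := Ne.symm hik
         try have hjk' : _ ≠ _ := Ne.symm hjk
         try have hi1' : _ ≠ _ := Ne.symm hi1
         try have hi2' : _ ≠ _ := Ne.symm hi2
         try have hj1' : _ ≠ _ := Ne.symm hj1
         try have hj2' : _ ≠ _ := Ne.symm hj2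
         try have hk1' : _ ≠ _ := Ne.symm hk1
         try have hk2' : _ ≠ _ := Ne.symm hk2
         simp [*, Ne.symm hzl] <;>
          first
            | module
            | (match_scalars <;> ring_nf <;> simp [hε2, hε2'] <;> ring_nf))
  set Dl : L →ₗ[ℝ] L →ₗ[ℝ] L := LinearMap.mk₂ ℝ D hDadd_l hDsmul_l hDadd_r hDsmul_r
    with hDldef
  set Wf : L → L → (L →ₗ[ℝ] L) := fun X Y =>
    Dl X ∘ₗ Dl Y - Dl Y ∘ₗ Dl X - Dl ⁅X, Y⁆ -
      (-(lam ^ 2 * ε ℓ + ε z)) • ((B Y).smulRight X - (B X).smulRight Y) with hWfdef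
  have hWf : ∀ X Y Z : L, Wf X Y Z =
      D X (D Y Z) - D Y (D X Z) - D ⁅X, Y⁆ Z -
        (-(lam ^ 2 * ε ℓ + ε z)) • (B Y Z • X - B X Z • Y) := by
    intro X Y Z
    simp [hWfdef, hDldef, LinearMap.sub_apply, LinearMap.smul_apply, LinearMap.comp_apply,
      LinearMap.smulRight_apply, LinearMap.mk₂_apply, smul_sub]
  have pf1 : ∀ X X' Y : L, Wf (X + X') Y = Wf X Y + Wf X' Y := by
    intro X X' Y; apply LinearMap.ext; intro Z
    simp only [LinearMap.add_apply, hWf, hDadd_l, hDadd_r, add_lie, map_add, LinearMap.add_apply,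
      smul_add, smul_sub, add_smul]
    module
  have pf2 : ∀ (a : ℝ) (X Y : L), Wf (a • X) Y = a • Wf X Y := by
    intro a X Y; apply LinearMap.ext; intro Z
    simp only [LinearMap.smul_apply, hWf, hDsmul_l, hDsmul_r, smul_lie, map_smul,
      LinearMap.smul_apply, smul_eq_mul, smul_sub, smul_add, mul_smul]
    module
  have pf3 : ∀ X Y Y' : L, Wf X (Y + Y') = Wf X Y + Wf X Y' := by
    intro X Y Y'; apply LinearMap.ext; intro Z
    simp only [LinearMap.add_apply, hWf, hDadd_l, hDadd_r, lie_add, map_add,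
      LinearMap.add_apply, smul_add, smul_sub, add_smul]
    module
  have pf4 : ∀ (a : ℝ) (X Y : L), Wf X (a • Y) = a • Wf X Y := by
    intro a X Y; apply LinearMap.ext; intro Z
    simp only [LinearMap.smul_apply, hWf, hDsmul_l, hDsmul_r, lie_smul, map_smul,
      LinearMap.smul_apply, smul_eq_mul, smul_sub, smul_add, mul_smul]
    module
  set F : L →ₗ[ℝ] L →ₗ[ℝ] L →ₗ[ℝ] L := LinearMap.mk₂ ℝ Wf pf1 pf2 pf3 pf4 with hFdef
  have hFzero : F = 0 := by
    apply Module.Basis.ext x; intro i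
    apply Module.Basis.ext x; intro j
    apply Module.Basis.ext x; intro k
    have h0 : Wf (x i) (x j) (x k) = 0 := by
      rw [hWf]; rw [key i j k]; abel
    simp only [hFdef, LinearMap.mk₂_apply, LinearMap.zero_apply, h0]
  intro X Y Z
  have h1 : Wf X Y Z = 0 := by
    have : F X Y Z = 0 := by rw [hFzero]; simp
    simpa only [hFdef, LinearMap.mk₂_apply] using this
  rw [hWf] at h1
  have := sub_eq_zero.mp h1
  exact this
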